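/- In NCSym, the basis q_A = \sum_{B ≥_* A} m_B is multiplicative with respect to atomic factorization: if A^! = (A^{(1)},...,A^{(k)}) then q_A = q_{A^{(1)}} q_{A^{(2)}} ··· q_{A^{(k)}}; consequently NCSym is freely generated by {q_A : A atomic}. -/

import Mathlib

open scoped Classical
noncomputable section

/-- The ground set `[n] = {1, …, n}`. -/
def ground (n : ℕ) : Finset ℕ := Finset.Icc 1 n

/-- `A` is a set partition of `[n]`. -/
def IsSetPartition (n : ℕ) (A : Finset (Finset ℕ)) : Prop :=
  (∀ B ∈ A, B.Nonempty) ∧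
  (∀ B ∈ A, ∀ C ∈ A, B ≠ C → Disjoint B C) ∧
  A.sup id = ground n

/-- Shift every entry of every part by `n`. -/
def shiftP (n : ℕ) (A : Finset (Finset ℕ)) : Finset (Finset ℕ) :=
  A.image (fun B => B.image (· + n))

/-- Shifted concatenation `A|B` of a set partition `A ⊢ [n]` with `B`. -/
def concatP (n : ℕ) (A B : Finset (Finset ℕ)) : Finset (Finset ℕ) :=
  A ∪ shiftP n B

/-- `A` is an atomic set partition of `[n]`: nonempty and not a nontrivial
shifted concatenation. -/
def AtomicP (n : ℕ) (A : Finset (Finset ℕ)) : Prop :=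
  IsSetPartition n A ∧ 0 < n ∧
  ¬ ∃ k B C, 0 < k ∧ k < n ∧ IsSetPartition k B ∧ IsSetPartition (n - k) C ∧
      A = concatP k B C

/-- Shifted concatenation of a list of (size, set partition) pairs. -/
def concatListP : List (ℕ × Finset (Finset ℕ)) → ℕ × Finset (Finset ℕ)
  | [] => (0, ∅)
  | p :: L => ((concatListP L).1 + p.1, concatP p.1 p.2 (concatListP L).2)

/-- `L` is the atomic factorization `A^!` of the set partition `A ⊢ [n]`. -/
def AtomicFactorization (n : ℕ) (A : Finset (Finset ℕ))
    (L : List (ℕ × Finset (Finset ℕ))) : Prop :=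
  (∀ p ∈ L, AtomicP p.1 p.2) ∧ concatListP L = (n, A)

/-- The Bell number: the number of set partitions of `[n]`. -/
def bell (n : ℕ) : ℕ := Nat.card {A : Finset (Finset ℕ) // IsSetPartition n A}

/-- Stirling numbers of the second kind: set partitions of `[n]` into `k` parts. -/
def stirling2 (n k : ℕ) : ℕ :=
  Nat.card {A : Finset (Finset ℕ) // IsSetPartition n A ∧ A.card = k}

/-- The number of atomic set partitions of `[n]` into `k` parts. -/
def atomCount (n k : ℕ) : ℕ :=
  Nat.card {A : Finset (Finset ℕ) // AtomicP n A ∧ A.card = k}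

/-- The number of atomic set partitions of `[n]`. -/
def atomCount' (n : ℕ) : ℕ := Nat.card {A : Finset (Finset ℕ) // AtomicP n A}

/-- Refinement order: `A ≤ B` iff every part of `A` is contained in a part of `B`. -/
def refines (A B : Finset (Finset ℕ)) : Prop := ∀ a ∈ A, ∃ b ∈ B, a ⊆ b

/-- The meet `A ∧ B` of two set partitions. -/
def meetP (A B : Finset (Finset ℕ)) : Finset (Finset ℕ) :=
  ((A ×ˢ B).image fun p => p.1 ∩ p.2).filter (·.Nonempty)

/-- The set partition `{[n]}` with a single part (empty if `n = 0`). -/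
def onePartP (n : ℕ) : Finset (Finset ℕ) := if n = 0 then ∅ else {ground n}

/-- The finite set of set partitions of `[n]` satisfying a predicate `P`. -/
def SPs (n : ℕ) (P : Finset (Finset ℕ) → Prop) : Finset (Finset (Finset ℕ)) :=
  (ground n).powerset.powerset.filter fun A => IsSetPartition n A ∧ P A

/-- Covering relation for `≤_*`: `B` covers `A` if `B` is obtained from `A` by merging two
parts `a, a'` with every element of `a` smaller than every element of `a'`. -/
def coverStar (A B : Finset (Finset ℕ)) : Prop :=
  ∃ a ∈ A, ∃ a' ∈ A, a ≠ a' ∧ (∀ x ∈ a, ∀ y ∈ a', x < y) ∧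
    B = insert (a ∪ a') ((A.erase a).erase a')

/-- The order `≤_*` on set partitions. -/
def leStar : Finset (Finset ℕ) → Finset (Finset ℕ) → Prop :=
  Relation.ReflTransGen coverStar

/-- Restriction `A↓_S` of a set partition to the entries in `S`. -/
def restrictP (A : Finset (Finset ℕ)) (S : Finset ℕ) : Finset (Finset ℕ) :=
  (A.image (· ∩ S)).filter (·.Nonempty)

/-- The standardization map of a finite set `S`: sends the `i`-th smallest element of `S`
to `i` (1-indexed). -/
def stMap (S : Finset ℕ) (x : ℕ) : ℕ := (S.filter (· ≤ x)).card

/-- Standardization of a set partition: relabel its entries to `{1,…,m}` preserving order. -/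
def stdP (A : Finset (Finset ℕ)) : Finset (Finset ℕ) :=
  A.image fun b => b.image (stMap (A.sup id))

/-- The map raising `{1,…,|S|}` order-preservingly onto `S`. -/
def raiseMap (S : Finset ℕ) (x : ℕ) : ℕ := (S.sort (· ≤ ·)).getD (x - 1) 0

/-- `A↑_S`: raise the entries of `A` order-preservingly so the ground set becomes `S`. -/
def raiseP (S : Finset ℕ) (A : Finset (Finset ℕ)) : Finset (Finset ℕ) :=
  A.image fun b => b.image (raiseMap S)

/-- `IsShuffle l₁ l₂ l`: `l` is a shuffle (interleaving) of `l₁` and `l₂`. -/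
inductive IsShuffle {α : Type*} : List α → List α → List α → Prop
  | nil : IsShuffle [] [] []
  | left {a : α} {l₁ l₂ l : List α} : IsShuffle l₁ l₂ l → IsShuffle (a :: l₁) l₂ (a :: l)
  | right {a : α} {l₁ l₂ l : List α} : IsShuffle l₁ l₂ l → IsShuffle l₁ (a :: l₂) (a :: l)

/-- A word is Lyndon if it is nonempty and lexicographically strictly smaller than all of
its proper cyclic rotations. -/
def LyndonWord {α : Type*} (lt : α → α → Prop) (w : List α) : Prop :=
  w ≠ [] ∧ ∀ i, 0 < i → i < w.length → List.Lex lt w (w.rotate i)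

/-- A set partition is Lyndon (with respect to a total order `lt` on atomic set partitions)
if its atomic factorization is a Lyndon word. -/
def LyndonPartition (lt : ℕ × Finset (Finset ℕ) → ℕ × Finset (Finset ℕ) → Prop)
    (n : ℕ) (A : Finset (Finset ℕ)) : Prop :=
  ∃ L, AtomicFactorization n A L ∧ LyndonWord lt L

/-! ### Set compositions -/

/-- `Φ` is a set composition of `[n]`: an ordered sequence of nonempty pairwise disjoint
sets whose union is `[n]`. -/
def IsSetComposition (n : ℕ) (Φ : List (Finset ℕ)) : Prop :=
  (∀ B ∈ Φ, B.Nonempty) ∧ Φ.Pairwise Disjoint ∧ Φ.foldr (· ∪ ·) ∅ = ground n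

/-- Shift every entry of every part of a set composition by `n`. -/
def shiftC (n : ℕ) (Φ : List (Finset ℕ)) : List (Finset ℕ) :=
  Φ.map (·.image (· + n))

/-- Shifted concatenation `Φ|Ψ` of set compositions, `Φ ⊨ [n]`. -/
def concatC (n : ℕ) (Φ Ψ : List (Finset ℕ)) : List (Finset ℕ) := Φ ++ shiftC n Ψ

/-- An atomic set composition: nonempty and not a nontrivial shifted concatenation. -/
def AtomicC (n : ℕ) (Φ : List (Finset ℕ)) : Prop :=
  IsSetComposition n Φ ∧ 0 < n ∧
  ¬ ∃ k Ψ Γ, 0 < k ∧ k < n ∧ IsSetComposition k Ψ ∧ IsSetComposition (n - k) Γ ∧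
      Φ = concatC k Ψ Γ

/-- Shifted concatenation of a list of (size, set composition) pairs. -/
def concatListC : List (ℕ × List (Finset ℕ)) → ℕ × List (Finset ℕ)
  | [] => (0, [])
  | p :: L => ((concatListC L).1 + p.1, concatC p.1 p.2 (concatListC L).2)

/-- `L` is the atomic factorization `Φ^!` of the set composition `Φ ⊨ [n]`. -/
def AtomicFactorizationC (n : ℕ) (Φ : List (Finset ℕ))
    (L : List (ℕ × List (Finset ℕ))) : Prop :=
  (∀ p ∈ L, AtomicC p.1 p.2) ∧ concatListC L = (n, Φ)

/-- Covering relation for `≤_*` on set compositions: merge two adjacent parts `a, b` with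
every element of `a` smaller than every element of `b`. -/
def coverStarC (Φ Ψ : List (Finset ℕ)) : Prop :=
  ∃ L₁ a b L₂, Φ = L₁ ++ a :: b :: L₂ ∧ (∀ x ∈ a, ∀ y ∈ b, x < y) ∧
    Ψ = L₁ ++ (a ∪ b) :: L₂

/-- The order `≤_*` on set compositions. -/
def leStarC : List (Finset ℕ) → List (Finset ℕ) → Prop :=
  Relation.ReflTransGen coverStarC

/-- The meet operation `Φ ∧ Ψ` on set compositions: the nonempty intersections
`Φ_i ∩ Ψ_j` in lexicographic order of `(i, j)`. -/
def meetC (Φ Ψ : List (Finset ℕ)) : List (Finset ℕ) :=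
  (Φ.flatMap fun a => Ψ.map fun b => a ∩ b).filter (·.Nonempty)

/-- The one-part set composition `([n])` (empty if `n = 0`). -/
def onePartC (n : ℕ) : List (Finset ℕ) := if n = 0 then [] else [ground n]

/-- Lists of length `k` with all entries in `s`. -/
def listsOfLen (s : Finset (Finset ℕ)) : ℕ → Finset (List (Finset ℕ))
  | 0 => {[]}
  | k + 1 => (s ×ˢ listsOfLen s k).image fun p => p.1 :: p.2

/-- The finite set of set compositions of `[n]` satisfying a predicate `P`. -/
def SCs (n : ℕ) (P : List (Finset ℕ) → Prop) : Finset (List (Finset ℕ)) :=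
  ((Finset.range (n + 1)).biUnion fun k => listsOfLen (ground n).powerset k).filter
    fun Φ => IsSetComposition n Φ ∧ P Φ

/-- `Φ↑_S`: raise the entries of a set composition order-preservingly into `S`. -/
def raiseC (S : Finset ℕ) (Φ : List (Finset ℕ)) : List (Finset ℕ) :=
  Φ.map (·.image (raiseMap S))

/-- Standardization of a set composition. -/
def stdC (Φ : List (Finset ℕ)) : List (Finset ℕ) :=
  Φ.map (·.image (stMap (Φ.foldr (· ∪ ·) ∅)))

/-- `α(Φ)`: the composition of part sizes of `Φ`. -/
def alphaC (Φ : List (Finset ℕ)) : List ℕ := Φ.map Finset.card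

/-- The order `≤_#` on set compositions: `Φ ≤_# Ψ` iff `α(Φ) = α(Ψ)` and each atomic factor
of `Φ` is the standardization of the corresponding consecutive block of parts of `Ψ`. -/
def leSharp (Φ Ψ : List (Finset ℕ)) : Prop :=
  alphaC Φ = alphaC Ψ ∧
  ∃ (L : List (ℕ × List (Finset ℕ))) (Bs : List (List (Finset ℕ))),
    (∀ p ∈ L, AtomicC p.1 p.2) ∧ (concatListC L).2 = Φ ∧
    Ψ = Bs.flatten ∧ List.Forall₂ (fun b (l : ℕ × List (Finset ℕ)) => stdC b = l.2) Bs L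

/-! ### Index types -/

/-- Set partitions with their sizes. -/
abbrev SPIdx := {x : ℕ × Finset (Finset ℕ) // IsSetPartition x.1 x.2}

/-- Atomic set partitions with their sizes. -/
abbrev AtomIdx := {x : ℕ × Finset (Finset ℕ) // AtomicP x.1 x.2}

/-- Set compositions with their sizes. -/
abbrev SCIdx := {x : ℕ × List (Finset ℕ) // IsSetComposition x.1 x.2}

/-- Atomic set compositions with their sizes. -/
abbrev AtomCIdx := {x : ℕ × List (Finset ℕ) // AtomicC x.1 x.2}

namespace NCSymProof

open Finset

lemma mem_ground {n x : ℕ} : x ∈ ground n ↔ 1 ≤ x ∧ x ≤ n := by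
  simp [ground, Finset.mem_Icc]

lemma ground_zero : ground 0 = ∅ := Finset.Icc_eq_empty (by omega)

lemma part_subset_ground {n : ℕ} {A : Finset (Finset ℕ)} (hA : IsSetPartition n A)
    {b : Finset ℕ} (hb : b ∈ A) : b ⊆ ground n := by
  have := Finset.le_sup (f := id) hb
  rw [hA.2.2] at this; exact this

lemma exists_part {n : ℕ} {A : Finset (Finset ℕ)} (hA : IsSetPartition n A)
    {x : ℕ} (hx : x ∈ ground n) : ∃ b ∈ A, x ∈ b := by
  rw [← hA.2.2] at hx
  simpa using (Finset.mem_sup.mp hx)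

lemma isSetPartition_zero {A : Finset (Finset ℕ)} (hA : IsSetPartition 0 A) : A = ∅ := by
  ext b
  simp only [Finset.notMem_empty, iff_false]
  intro hb
  have h2 := part_subset_ground hA hb
  rw [ground_zero, Finset.subset_empty] at h2
  exact (hA.1 b hb).ne_empty h2

lemma isSetPartition_empty : IsSetPartition 0 (∅ : Finset (Finset ℕ)) := by
  refine ⟨by simp, by simp, ?_⟩
  simp [ground_zero]

/-! ### lower and upper projections -/

def lowP (n : ℕ) (c : Finset ℕ) : Finset ℕ := c ∩ ground n

def upP (n : ℕ) (c : Finset ℕ) : Finset ℕ := (c.filter (n < ·)).image (· - n)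

def lowerP (n : ℕ) (C : Finset (Finset ℕ)) : Finset (Finset ℕ) :=
  (C.image (lowP n)).filter (·.Nonempty)

def upperP (n : ℕ) (C : Finset (Finset ℕ)) : Finset (Finset ℕ) :=
  (C.image (upP n)).filter (·.Nonempty)

lemma mem_lowP {n x : ℕ} {c : Finset ℕ} : x ∈ lowP n c ↔ x ∈ c ∧ 1 ≤ x ∧ x ≤ n := by
  simp [lowP, mem_ground, and_assoc]

lemma mem_upP {n x : ℕ} {c : Finset ℕ} : x ∈ upP n c ↔ 0 < x ∧ x + n ∈ c := by
  constructor
  · rintro h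
    simp only [upP, Finset.mem_image, Finset.mem_filter] at h
    obtain ⟨w, ⟨hw, hwn⟩, rfl⟩ := h
    constructor
    · omega
    · have : w - n + n = w := by omega
      rwa [this]
  · rintro ⟨hx, hxc⟩
    simp only [upP, Finset.mem_image, Finset.mem_filter]
    exact ⟨x + n, ⟨hxc, by omega⟩, by omega⟩

lemma lowP_union (n : ℕ) (x y : Finset ℕ) : lowP n (x ∪ y) = lowP n x ∪ lowP n y := by
  ext z; simp only [mem_lowP, Finset.mem_union]; tauto

lemma upP_union (n : ℕ) (x y : Finset ℕ) : upP n (x ∪ y) = upP n x ∪ upP n y := by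
  ext z; simp only [mem_upP, Finset.mem_union]; tauto

lemma lowP_disjoint {n : ℕ} {x y : Finset ℕ} (h : Disjoint x y) :
    Disjoint (lowP n x) (lowP n y) :=
  h.mono (Finset.inter_subset_left) (Finset.inter_subset_left)

lemma upP_disjoint {n : ℕ} {x y : Finset ℕ} (h : Disjoint x y) :
    Disjoint (upP n x) (upP n y) := by
  rw [Finset.disjoint_left]
  intro z hz hz'
  rw [mem_upP] at hz hz'
  exact (Finset.disjoint_left.mp h) hz.2 hz'.2

lemma eq_empty_of_self_disjoint {s : Finset ℕ} (h : Disjoint s s) : s = ∅ :=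
  disjoint_self.mp h

/-- The key projection lemma: projecting a cover yields `≤_*` (a cover or equality). -/
lemma cover_proj {E C : Finset (Finset ℕ)} (π : Finset ℕ → Finset ℕ)
    (hπU : ∀ x y, π (x ∪ y) = π x ∪ π y)
    (hdisj : ∀ x y, Disjoint x y → Disjoint (π x) (π y))
    (hE : ∀ b ∈ E, ∀ b' ∈ E, b ≠ b' → Disjoint b b')
    (hord : ∀ a ∈ E, ∀ a' ∈ E, (∀ x ∈ a, ∀ y ∈ a', x < y) →
      ∀ x ∈ π a, ∀ y ∈ π a', x < y)
    (h : coverStar E C) :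
    leStar ((E.image π).filter (·.Nonempty)) ((C.image π).filter (·.Nonempty)) := by
  obtain ⟨a, ha, a', ha', hne, hlt, rfl⟩ := h
  have hdaa' : Disjoint (π a) (π a') := hdisj _ _ (hE a ha a' ha' hne)
  have hπb_ne : ∀ b ∈ E, b ≠ a → b ≠ a' → (π b).Nonempty → π b ≠ π a ∧ π b ≠ π a' := by
    intro b hb hba hba' hne'
    constructor
    · intro hh
      have : Disjoint (π b) (π a) := hdisj _ _ (hE b hb a ha hba)
      rw [hh] at this
      exact hne'.ne_empty (by rw [hh]; exact eq_empty_of_self_disjoint this)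
    · intro hh
      have : Disjoint (π b) (π a') := hdisj _ _ (hE b hb a' ha' hba')
      rw [hh] at this
      exact hne'.ne_empty (by rw [hh]; exact eq_empty_of_self_disjoint this)
  by_cases hcase : (π a).Nonempty ∧ (π a').Nonempty
  · obtain ⟨hpa, hpa'⟩ := hcase
    refine Relation.ReflTransGen.single ?_
    refine ⟨π a, ?_, π a', ?_, ?_, ?_, ?_⟩
    · exact Finset.mem_filter.mpr ⟨Finset.mem_image_of_mem _ ha, hpa⟩
    · exact Finset.mem_filter.mpr ⟨Finset.mem_image_of_mem _ ha', hpa'⟩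
    · intro hh
      rw [hh] at hdaa' hpa
      exact hpa.ne_empty (eq_empty_of_self_disjoint hdaa')
    · exact hord a ha a' ha' hlt
    · ext z
      simp only [Finset.mem_filter, Finset.mem_image, Finset.mem_insert, Finset.mem_erase]
      constructor
      · rintro ⟨⟨b, hb, rfl⟩, hz⟩
        rcases hb with rfl | ⟨hba', hba, hbE⟩
        · left; exact hπU a a'
        · right
          obtain ⟨h1, h2⟩ := hπb_ne b hbE hba hba' hz
          exact ⟨h2, h1, ⟨b, hbE, rfl⟩, hz⟩
      · rintro (rfl | ⟨h2, h1, ⟨b, hb, rfl⟩, hz⟩)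
        · refine ⟨⟨a ∪ a', Or.inl rfl, hπU a a'⟩, hpa.mono Finset.subset_union_left⟩
        · have hba : b ≠ a := fun hh => h1 (by rw [hh])
          have hba' : b ≠ a' := fun hh => h2 (by rw [hh])
          exact ⟨⟨b, Or.inr ⟨hba', hba, hb⟩, rfl⟩, hz⟩
  · -- one of the projections is empty: the projected partition is unchanged
    have heq : ((insert (a ∪ a') ((E.erase a).erase a')).image π).filter (·.Nonempty)
        = (E.image π).filter (·.Nonempty) := by
      ext z
      simp only [Finset.mem_filter, Finset.mem_image, Finset.mem_insert, Finset.mem_erase]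
      constructor
      · rintro ⟨⟨b, hb, rfl⟩, hz⟩
        rcases hb with rfl | ⟨hba', hba, hbE⟩
        · rw [hπU] at hz ⊢
          by_cases hpa : (π a).Nonempty
          · have hpa' : π a' = ∅ := by
              by_contra hne'
              exact hcase ⟨hpa, Finset.nonempty_iff_ne_empty.mpr hne'⟩
            rw [hpa', Finset.union_empty] at hz ⊢
            exact ⟨⟨a, ha, rfl⟩, hz⟩
          · have hpa0 : π a = ∅ := Finset.not_nonempty_iff_eq_empty.mp hpa
            rw [hpa0, Finset.empty_union] at hz ⊢
            exact ⟨⟨a', ha', rfl⟩, hz⟩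
        · exact ⟨⟨b, hbE, rfl⟩, hz⟩
      · rintro ⟨⟨b, hb, rfl⟩, hz⟩
        by_cases hba : b = a
        · subst hba
          have hpa' : π a' = ∅ := by
            by_contra hne'
            exact hcase ⟨hz, Finset.nonempty_iff_ne_empty.mpr hne'⟩
          refine ⟨⟨b ∪ a', Or.inl rfl, ?_⟩, hz⟩
          rw [hπU, hpa', Finset.union_empty]
        · by_cases hba' : b = a'
          · subst hba'
            have hpa : π a = ∅ := by
              by_contra hne'
              exact hcase ⟨Finset.nonempty_iff_ne_empty.mpr hne', hz⟩
            refine ⟨⟨a ∪ b, Or.inl rfl, ?_⟩, hz⟩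
            rw [hπU, hpa, Finset.empty_union]
          · exact ⟨⟨b, Or.inr ⟨hba', hba, hb⟩, rfl⟩, hz⟩
    rw [heq]
    exact Relation.ReflTransGen.refl

/-! ### covers and partitions -/

lemma cover_partition {n : ℕ} {E C : Finset (Finset ℕ)} (hE : IsSetPartition n E)
    (h : coverStar E C) : IsSetPartition n C ∧ C.card < E.card := by
  obtain ⟨a, ha, a', ha', hne, hlt, rfl⟩ := h
  obtain ⟨hne', hdis, hsup⟩ := hE
  have hu_not : a ∪ a' ∉ (E.erase a).erase a' := by
    intro hu
    have huE : a ∪ a' ∈ E := Finset.mem_of_mem_erase (Finset.mem_of_mem_erase hu)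
    have hua : a ∪ a' ≠ a := (Finset.mem_erase.mp (Finset.mem_of_mem_erase hu)).1
    have : Disjoint (a ∪ a') a := hdis _ huE a ha hua
    exact (hne' a ha).ne_empty (eq_empty_of_self_disjoint
      (this.mono_left Finset.subset_union_left))
  have hmem : ∀ b, b ∈ insert (a ∪ a') ((E.erase a).erase a') →
      b = a ∪ a' ∨ (b ∈ E ∧ b ≠ a ∧ b ≠ a') := by
    intro b hb
    rcases Finset.mem_insert.mp hb with rfl | hb
    · exact Or.inl rfl
    · exact Or.inr ⟨Finset.mem_of_mem_erase (Finset.mem_of_mem_erase hb),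
        (Finset.mem_erase.mp (Finset.mem_of_mem_erase hb)).1, (Finset.mem_erase.mp hb).1⟩
  constructor
  · refine ⟨?_, ?_, ?_⟩
    · intro b hb
      rcases hmem b hb with rfl | ⟨hb, _, _⟩
      · exact (hne' a ha).mono Finset.subset_union_left
      · exact hne' b hb
    · intro b hb c hc hbc
      rcases hmem b hb with rfl | ⟨hbE, hba, hba'⟩
      · rcases hmem c hc with rfl | ⟨hcE, hca, hca'⟩
        · exact absurd rfl hbc
        · exact Finset.disjoint_union_left.mpr
            ⟨hdis a ha c hcE (Ne.symm hca), hdis a' ha' c hcE (Ne.symm hca')⟩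
      · rcases hmem c hc with rfl | ⟨hcE, _, _⟩
        · exact (Finset.disjoint_union_right.mpr
            ⟨hdis b hbE a ha hba, hdis b hbE a' ha' hba'⟩)
        · exact hdis b hbE c hcE hbc
    · apply le_antisymm
      · apply Finset.sup_le
        intro b hb
        rcases hmem b hb with rfl | ⟨hbE, _, _⟩
        · rw [← hsup]
          exact Finset.union_subset (Finset.le_sup (f := id) ha) (Finset.le_sup (f := id) ha')
        · rw [← hsup]; exact Finset.le_sup (f := id) hbE
      · rw [← hsup]
        apply Finset.sup_le
        intro b hbE
        by_cases hba : b = a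
        · subst hba
          exact le_trans (Finset.subset_union_left (s₂ := a'))
            (Finset.le_sup (f := id) (Finset.mem_insert_self _ _))
        · by_cases hba' : b = a'
          · subst hba'
            exact le_trans (Finset.subset_union_right (s₁ := a))
              (Finset.le_sup (f := id) (Finset.mem_insert_self _ _))
          · exact Finset.le_sup (f := id) (Finset.mem_insert_of_mem
              (Finset.mem_erase.mpr ⟨hba', Finset.mem_erase.mpr ⟨hba, hbE⟩⟩))
  · have h2 : 2 ≤ E.card := Finset.one_lt_card.mpr ⟨a, ha, a', ha', hne⟩
    have ha'e : a' ∈ E.erase a := Finset.mem_erase.mpr ⟨Ne.symm hne, ha'⟩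
    rw [Finset.card_insert_of_notMem hu_not, Finset.card_erase_of_mem ha'e,
      Finset.card_erase_of_mem ha]
    omega

lemma leStar_partition {n : ℕ} {E C : Finset (Finset ℕ)} (hE : IsSetPartition n E)
    (h : leStar E C) :
    IsSetPartition n C ∧ C.card ≤ E.card ∧ (C.card = E.card → C = E) := by
  induction h with
  | refl => exact ⟨hE, le_rfl, fun _ => rfl⟩
  | tail _ hcov ih =>
    obtain ⟨hP, hcard, _⟩ := ih
    obtain ⟨hP', hlt⟩ := cover_partition hP hcov
    exact ⟨hP', le_trans hlt.le hcard, fun hh => absurd hh (by omega)⟩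

/-! ### shift and concat -/

lemma mem_shift_iff' {n x : ℕ} {b : Finset ℕ} (hb : ∀ y ∈ b, 1 ≤ y) :
    x ∈ b.image (· + n) ↔ n < x ∧ x - n ∈ b := by
  simp only [Finset.mem_image]
  constructor
  · rintro ⟨y, hy, rfl⟩
    have h1 : 1 ≤ y := hb y hy
    have h2 : n < y + n := by omega
    refine ⟨h2, ?_⟩
    simpa using hy
  · rintro ⟨h1, h2⟩
    exact ⟨x - n, h2, by omega⟩

lemma shiftP_zero (B : Finset (Finset ℕ)) : shiftP 0 B = B := by
  simp [shiftP]

lemma concatP_empty (n : ℕ) (A : Finset (Finset ℕ)) : concatP n A ∅ = A := by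
  simp [concatP, shiftP]

lemma concatP_zero (B : Finset (Finset ℕ)) : concatP 0 ∅ B = B := by
  simp [concatP, shiftP_zero]

lemma shiftP_shiftP (k j : ℕ) (Z : Finset (Finset ℕ)) :
    shiftP k (shiftP j Z) = shiftP (k + j) Z := by
  simp only [shiftP, Finset.image_image]
  congr 1
  funext b
  simp only [Function.comp, Finset.image_image]
  congr 1
  funext x
  simp only [Function.comp]
  omega

lemma concatP_assoc (k j : ℕ) (X Y Z : Finset (Finset ℕ)) :
    concatP (k + j) (concatP k X Y) Z = concatP k X (concatP j Y Z) := by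
  simp only [concatP, shiftP, Finset.image_union, Finset.union_assoc]
  congr 2
  rw [← shiftP, ← shiftP, ← shiftP, shiftP_shiftP]

lemma isSetPartition_concatP {n k : ℕ} {A B : Finset (Finset ℕ)}
    (hA : IsSetPartition n A) (hB : IsSetPartition k B) :
    IsSetPartition (n + k) (concatP n A B) := by
  have hAel : ∀ a ∈ A, ∀ x ∈ a, 1 ≤ x ∧ x ≤ n := by
    intro a ha x hx
    exact mem_ground.mp (part_subset_ground hA ha hx)
  have hBel : ∀ b ∈ B, ∀ x ∈ b, 1 ≤ x ∧ x ≤ k := by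
    intro b hb x hx
    exact mem_ground.mp (part_subset_ground hB hb hx)
  have hShiftel : ∀ c ∈ shiftP n B, ∀ x ∈ c, n + 1 ≤ x ∧ x ≤ n + k := by
    intro c hc x hx
    obtain ⟨b, hb, rfl⟩ := Finset.mem_image.mp hc
    obtain ⟨y, hy, rfl⟩ := Finset.mem_image.mp hx
    have := hBel b hb y hy
    omega
  refine ⟨?_, ?_, ?_⟩
  · intro c hc
    rcases Finset.mem_union.mp hc with hc | hc
    · exact hA.1 c hc
    · obtain ⟨b, hb, rfl⟩ := Finset.mem_image.mp hc
      exact (hB.1 b hb).image _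
  · intro b hb c hc hbc
    rw [Finset.disjoint_left]
    intro x hxb hxc
    rcases Finset.mem_union.mp hb with hb' | hb' <;> rcases Finset.mem_union.mp hc with hc' | hc'
    · exact Finset.disjoint_left.mp (hA.2.1 b hb' c hc' hbc) hxb hxc
    · have := (hAel b hb' x hxb).2; have := (hShiftel c hc' x hxc).1; omega
    · have := (hAel c hc' x hxc).2; have := (hShiftel b hb' x hxb).1; omega
    · obtain ⟨b0, hb0, rfl⟩ := Finset.mem_image.mp hb'
      obtain ⟨c0, hc0, rfl⟩ := Finset.mem_image.mp hc'
      have hb0c0 : b0 ≠ c0 := fun hh => hbc (by rw [hh])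
      have hd := hB.2.1 b0 hb0 c0 hc0 hb0c0
      obtain ⟨y, hy, rfl⟩ := Finset.mem_image.mp hxb
      obtain ⟨z, hz, hzy⟩ := Finset.mem_image.mp hxc
      have : z = y := by omega
      subst this
      exact Finset.disjoint_left.mp hd hy hz
  · apply le_antisymm
    · apply Finset.sup_le
      intro c hc
      intro x hx
      rcases Finset.mem_union.mp hc with hc' | hc'
      · have := hAel c hc' x hx
        exact mem_ground.mpr ⟨this.1, by omega⟩
      · have := hShiftel c hc' x hx
        exact mem_ground.mpr ⟨by omega, this.2⟩
    · intro x hx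
      have hx' := mem_ground.mp hx
      by_cases hxn : x ≤ n
      · obtain ⟨b, hb, hxb⟩ := exists_part hA (mem_ground.mpr ⟨hx'.1, hxn⟩)
        exact Finset.mem_sup.mpr ⟨b, Finset.mem_union_left _ hb, hxb⟩
      · obtain ⟨b, hb, hxb⟩ := exists_part hB (mem_ground.mpr (by omega : 1 ≤ x - n ∧ x - n ≤ k))
        refine Finset.mem_sup.mpr ⟨b.image (· + n), Finset.mem_union_right _
          (Finset.mem_image_of_mem _ hb), ?_⟩
        simp only [id]
        exact Finset.mem_image.mpr ⟨x - n, hxb, by omega⟩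
/-! ### lowerP / upperP as partitions -/

lemma isSetPartition_lowerP {n k : ℕ} {C : Finset (Finset ℕ)} (hC : IsSetPartition (n + k) C) :
    IsSetPartition n (lowerP n C) := by
  refine ⟨fun b hb => (Finset.mem_filter.mp hb).2, ?_, ?_⟩
  · intro b hb c hc hbc
    obtain ⟨b0, hb0, rfl⟩ := Finset.mem_image.mp (Finset.mem_filter.mp hb).1
    obtain ⟨c0, hc0, rfl⟩ := Finset.mem_image.mp (Finset.mem_filter.mp hc).1
    have hne : b0 ≠ c0 := fun hh => hbc (by rw [hh])
    exact lowP_disjoint (hC.2.1 b0 hb0 c0 hc0 hne)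
  · apply le_antisymm
    · apply Finset.sup_le
      intro b hb
      obtain ⟨b0, hb0, rfl⟩ := Finset.mem_image.mp (Finset.mem_filter.mp hb).1
      intro x hx
      rw [id] at hx
      rw [mem_lowP] at hx
      exact mem_ground.mpr ⟨hx.2.1, hx.2.2⟩
    · intro x hx
      rw [mem_ground] at hx
      obtain ⟨b, hb, hxb⟩ := exists_part hC (mem_ground.mpr ⟨hx.1, by omega⟩)
      have hxl : x ∈ lowP n b := mem_lowP.mpr ⟨hxb, hx.1, hx.2⟩
      exact Finset.mem_sup.mpr ⟨lowP n b,
        Finset.mem_filter.mpr ⟨Finset.mem_image_of_mem _ hb, ⟨x, hxl⟩⟩, hxl⟩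

lemma isSetPartition_upperP {n k : ℕ} {C : Finset (Finset ℕ)} (hC : IsSetPartition (n + k) C) :
    IsSetPartition k (upperP n C) := by
  refine ⟨fun b hb => (Finset.mem_filter.mp hb).2, ?_, ?_⟩
  · intro b hb c hc hbc
    obtain ⟨b0, hb0, rfl⟩ := Finset.mem_image.mp (Finset.mem_filter.mp hb).1
    obtain ⟨c0, hc0, rfl⟩ := Finset.mem_image.mp (Finset.mem_filter.mp hc).1
    have hne : b0 ≠ c0 := fun hh => hbc (by rw [hh])
    exact upP_disjoint (hC.2.1 b0 hb0 c0 hc0 hne)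
  · apply le_antisymm
    · apply Finset.sup_le
      intro b hb
      obtain ⟨b0, hb0, rfl⟩ := Finset.mem_image.mp (Finset.mem_filter.mp hb).1
      intro x hx
      rw [id] at hx
      rw [mem_upP] at hx
      have := mem_ground.mp (part_subset_ground hC hb0 hx.2)
      exact mem_ground.mpr ⟨by omega, by omega⟩
    · intro x hx
      rw [mem_ground] at hx
      obtain ⟨b, hb, hxb⟩ := exists_part hC (mem_ground.mpr
        (by omega : 1 ≤ x + n ∧ x + n ≤ n + k))
      have hxu : x ∈ upP n b := mem_upP.mpr ⟨by omega, hxb⟩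
      exact Finset.mem_sup.mpr ⟨upP n b,
        Finset.mem_filter.mpr ⟨Finset.mem_image_of_mem _ hb, ⟨x, hxu⟩⟩, hxu⟩

lemma lowerP_zero (C : Finset (Finset ℕ)) : lowerP 0 C = ∅ := by
  ext z
  simp only [lowerP, Finset.mem_filter, Finset.mem_image, Finset.notMem_empty, iff_false]
  rintro ⟨⟨c, hc, rfl⟩, hz⟩
  simp [lowP, ground_zero] at hz

lemma upP_zero {c : Finset ℕ} (h : ∀ x ∈ c, 1 ≤ x) : upP 0 c = c := by
  ext x
  rw [mem_upP]
  constructor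
  · rintro ⟨_, h2⟩
    simpa using h2
  · intro hx
    exact ⟨h x hx, by simpa using hx⟩

lemma upperP_zero {C : Finset (Finset ℕ)} (hne : ∀ c ∈ C, c.Nonempty)
    (h : ∀ c ∈ C, ∀ x ∈ c, 1 ≤ x) : upperP 0 C = C := by
  ext z
  simp only [upperP, Finset.mem_filter, Finset.mem_image]
  constructor
  · rintro ⟨⟨c, hc, rfl⟩, _⟩
    rwa [upP_zero (h c hc)]
  · intro hz
    exact ⟨⟨z, hz, upP_zero (h z hz)⟩, hne z hz⟩

lemma lowP_of_subset {m : ℕ} {a : Finset ℕ} (h : a ⊆ ground m) : lowP m a = a :=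
  Finset.inter_eq_left.mpr h

lemma upP_of_subset {k j : ℕ} {a : Finset ℕ} (h : a ⊆ ground k) : upP (k + j) a = ∅ := by
  ext x
  rw [mem_upP]
  simp only [Finset.notMem_empty, iff_false]
  rintro ⟨h1, h2⟩
  have := mem_ground.mp (h h2)
  omega

lemma lowP_shift {k j : ℕ} {c : Finset ℕ} (hc : ∀ y ∈ c, 1 ≤ y) :
    lowP (k + j) (c.image (· + k)) = (lowP j c).image (· + k) := by
  ext x
  rw [mem_lowP, mem_shift_iff' hc, mem_shift_iff' (fun y hy => (mem_lowP.mp hy).2.1), mem_lowP]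
  constructor
  · rintro ⟨⟨h1, h2⟩, h3, h4⟩
    exact ⟨h1, h2, by omega, by omega⟩
  · rintro ⟨h1, h2, h3, h4⟩
    exact ⟨⟨h1, h2⟩, by omega, by omega⟩

lemma upP_shift {k j : ℕ} {c : Finset ℕ} (hc : ∀ y ∈ c, 1 ≤ y) :
    upP (k + j) (c.image (· + k)) = upP j c := by
  ext x
  rw [mem_upP, mem_upP, mem_shift_iff' hc]
  constructor
  · rintro ⟨h1, h2, h3⟩
    refine ⟨h1, ?_⟩
    have : x + (k + j) - k = x + j := by omega
    rwa [this] at h3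
  · rintro ⟨h1, h2⟩
    refine ⟨h1, by omega, ?_⟩
    have : x + (k + j) - k = x + j := by omega
    rwa [this]

lemma lowerP_concatP {k j : ℕ} {B C : Finset (Finset ℕ)}
    (hBg : ∀ a ∈ B, a ⊆ ground k) (hBne : ∀ a ∈ B, a.Nonempty)
    (hC : ∀ c ∈ C, ∀ y ∈ c, 1 ≤ y) :
    lowerP (k + j) (concatP k B C) = concatP k B (lowerP j C) := by
  ext z
  simp only [lowerP, concatP, shiftP, Finset.mem_filter, Finset.mem_image, Finset.mem_union]
  constructor
  · rintro ⟨⟨c, hc, rfl⟩, hz⟩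
    rcases hc with hc | hc
    · left
      rwa [lowP_of_subset (fun x hx => mem_ground.mpr
        (by have := mem_ground.mp (hBg c hc hx); omega))]
    · obtain ⟨c0, hc0, rfl⟩ := hc
      right
      rw [lowP_shift (hC c0 hc0)] at hz ⊢
      refine ⟨lowP j c0, ?_, rfl⟩
      exact ⟨⟨c0, hc0, rfl⟩, by rwa [Finset.image_nonempty] at hz⟩
  · rintro (hz | ⟨w, hw, rfl⟩)
    · refine ⟨⟨z, Or.inl hz, ?_⟩, hBne z hz⟩
      exact lowP_of_subset (fun x hx => mem_ground.mpr
        (by have := mem_ground.mp (hBg z hz hx); omega))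
    · obtain ⟨⟨c0, hc0, rfl⟩, hne⟩ := hw
      refine ⟨⟨c0.image (· + k), Or.inr ⟨c0, hc0, rfl⟩, ?_⟩, ?_⟩
      · exact lowP_shift (hC c0 hc0)
      · exact hne.image _

lemma upperP_concatP {k j : ℕ} {B C : Finset (Finset ℕ)}
    (hBg : ∀ a ∈ B, a ⊆ ground k)
    (hC : ∀ c ∈ C, ∀ y ∈ c, 1 ≤ y) :
    upperP (k + j) (concatP k B C) = upperP j C := by
  ext z
  simp only [upperP, concatP, shiftP, Finset.mem_filter, Finset.mem_image, Finset.mem_union]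
  constructor
  · rintro ⟨⟨c, hc, rfl⟩, hz⟩
    rcases hc with hc | hc
    · rw [upP_of_subset (hBg c hc)] at hz
      exact absurd rfl hz.ne_empty
    · obtain ⟨c0, hc0, rfl⟩ := hc
      rw [upP_shift (hC c0 hc0)] at hz ⊢
      exact ⟨⟨c0, hc0, rfl⟩, hz⟩
  · rintro ⟨⟨c0, hc0, rfl⟩, hz⟩
    exact ⟨⟨c0.image (· + k), Or.inr ⟨c0, hc0, rfl⟩, upP_shift (hC c0 hc0)⟩, hz⟩

lemma elems_ge_one {n : ℕ} {A : Finset (Finset ℕ)} (hA : IsSetPartition n A) :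
    ∀ c ∈ A, ∀ y ∈ c, 1 ≤ y :=
  fun c hc y hy => (mem_ground.mp (part_subset_ground hA hc hy)).1

lemma lowerP_concatP_self {n k : ℕ} {A B : Finset (Finset ℕ)}
    (hA : IsSetPartition n A) (hB : IsSetPartition k B) :
    lowerP n (concatP n A B) = A := by
  have h := lowerP_concatP (j := 0) (fun a ha => part_subset_ground hA ha) hA.1
    (elems_ge_one hB)
  rw [Nat.add_zero] at h
  rw [h, lowerP_zero, concatP_empty]

lemma upperP_concatP_self {n k : ℕ} {A B : Finset (Finset ℕ)}
    (hA : IsSetPartition n A) (hB : IsSetPartition k B) :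
    upperP n (concatP n A B) = B := by
  have h := upperP_concatP (j := 0) (fun a ha => part_subset_ground hA ha) (elems_ge_one hB)
  rw [Nat.add_zero] at h
  rw [h, upperP_zero hB.1 (elems_ge_one hB)]

lemma concatP_injective {n k : ℕ} {A A' B B' : Finset (Finset ℕ)}
    (hA : IsSetPartition n A) (hA' : IsSetPartition n A')
    (hB : IsSetPartition k B) (hB' : IsSetPartition k B')
    (h : concatP n A B = concatP n A' B') : A = A' ∧ B = B' := by
  constructor
  · rw [← lowerP_concatP_self hA hB, h, lowerP_concatP_self hA' hB']
  · rw [← upperP_concatP_self hA hB, h, upperP_concatP_self hA' hB']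
/-! ### lifting covers into concatenations -/

lemma coverStar_union_right {A A' S : Finset (Finset ℕ)} (h : coverStar A A')
    (hS : ∀ b ∈ A, b ∉ S) : coverStar (A ∪ S) (A' ∪ S) := by
  obtain ⟨a, haA, a', ha'A, hne, hlt, rfl⟩ := h
  refine ⟨a, Finset.mem_union_left _ haA, a', Finset.mem_union_left _ ha'A, hne, hlt, ?_⟩
  rw [Finset.insert_union, Finset.erase_union_distrib, Finset.erase_union_distrib,
    Finset.erase_eq_of_notMem (hS a haA), Finset.erase_eq_of_notMem (hS a' ha'A)]

lemma coverStar_shift {B B' : Finset (Finset ℕ)} (n : ℕ) (h : coverStar B B') :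
    coverStar (shiftP n B) (shiftP n B') := by
  obtain ⟨a, haA, a', ha'A, hne, hlt, rfl⟩ := h
  have hinj : Function.Injective (fun b : Finset ℕ => b.image (· + n)) :=
    Finset.image_injective (add_left_injective n)
  refine ⟨a.image (· + n), Finset.mem_image_of_mem _ haA,
    a'.image (· + n), Finset.mem_image_of_mem _ ha'A, fun hh => hne (hinj hh), ?_, ?_⟩
  · intro x hx y hy
    obtain ⟨p, hp, rfl⟩ := Finset.mem_image.mp hx
    obtain ⟨q, hq, rfl⟩ := Finset.mem_image.mp hy
    have := hlt p hp q hq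
    omega
  · show shiftP n _ = _
    rw [shiftP, Finset.image_insert, Finset.image_erase hinj, Finset.image_erase hinj,
      Finset.image_union]
    rfl

lemma leStar_concat_left {n k : ℕ} {A A' B : Finset (Finset ℕ)}
    (hA : IsSetPartition n A) (hB : IsSetPartition k B) (h : leStar A A') :
    leStar (concatP n A B) (concatP n A' B) := by
  have hS : ∀ (X : Finset (Finset ℕ)), IsSetPartition n X → ∀ b ∈ X, b ∉ shiftP n B := by
    intro X hX b hb hbS
    obtain ⟨b0, hb0, rfl⟩ := Finset.mem_image.mp hbS
    obtain ⟨y, hy⟩ := hB.1 b0 hb0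
    have h1 : y + n ∈ b0.image (· + n) := Finset.mem_image_of_mem _ hy
    have h2 := mem_ground.mp (part_subset_ground hX hb h1)
    have h3 := (mem_ground.mp (part_subset_ground hB hb0 hy)).1
    omega
  induction h with
  | refl => exact .refl
  | @tail Y Z hxy hcov ih =>
    have hY := (leStar_partition hA hxy).1
    exact ih.tail (coverStar_union_right hcov (hS Y hY))

lemma leStar_concat_right {n k : ℕ} {A B B' : Finset (Finset ℕ)}
    (hA : IsSetPartition n A) (hB : IsSetPartition k B) (h : leStar B B') :
    leStar (concatP n A B) (concatP n A B') := by
  have hS : ∀ (X : Finset (Finset ℕ)), IsSetPartition k X → ∀ b ∈ shiftP n X, b ∉ A := by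
    intro X hX b hb hbA
    obtain ⟨b0, hb0, rfl⟩ := Finset.mem_image.mp hb
    obtain ⟨y, hy⟩ := hX.1 b0 hb0
    have h1 : y + n ∈ b0.image (· + n) := Finset.mem_image_of_mem _ hy
    have h2 := mem_ground.mp (part_subset_ground hA hbA h1)
    have h3 := (mem_ground.mp (part_subset_ground hX hb0 hy)).1
    omega
  rw [concatP, concatP, Finset.union_comm A, Finset.union_comm A]
  induction h with
  | refl => exact .refl
  | @tail Y Z hxy hcov ih =>
    have hY := (leStar_partition hB hxy).1
    exact ih.tail (coverStar_union_right (coverStar_shift n hcov) (hS Y hY))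

/-! ### projecting leStar -/

lemma leStar_lowerP {n N : ℕ} {E C : Finset (Finset ℕ)} (hE : IsSetPartition N E)
    (h : leStar E C) : leStar (lowerP n E) (lowerP n C) := by
  induction h with
  | refl => exact .refl
  | @tail Y Z hxy hcov ih =>
    have hY := (leStar_partition hE hxy).1
    refine ih.trans ?_
    exact cover_proj (lowP n) (lowP_union n) (fun x y => lowP_disjoint) hY.2.1
      (fun a ha a' ha' hlt x hx y hy =>
        hlt x (Finset.mem_of_mem_inter_left hx) y (Finset.mem_of_mem_inter_left hy)) hcov

lemma leStar_upperP {n N : ℕ} {E C : Finset (Finset ℕ)} (hE : IsSetPartition N E)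
    (h : leStar E C) : leStar (upperP n E) (upperP n C) := by
  induction h with
  | refl => exact .refl
  | @tail Y Z hxy hcov ih =>
    have hY := (leStar_partition hE hxy).1
    refine ih.trans ?_
    refine cover_proj (upP n) (upP_union n) (fun x y => upP_disjoint) hY.2.1 ?_ hcov
    intro a _ a' _ hlt x hx y hy
    rw [mem_upP] at hx hy
    have := hlt (x + n) hx.2 (y + n) hy.2
    omega
/-! ### splitting a partition at n -/

lemma lowP_idem {n : ℕ} (c : Finset ℕ) : lowP n (lowP n c) = lowP n c :=
  lowP_of_subset Finset.inter_subset_right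

lemma upP_lowP {n : ℕ} (c : Finset ℕ) : upP n (lowP n c) = ∅ := by
  ext x
  rw [mem_upP, mem_lowP]
  simp only [Finset.notMem_empty, iff_false]
  rintro ⟨h1, _, _, h4⟩
  omega

lemma mem_shift_upP {n x : ℕ} {c : Finset ℕ} :
    x ∈ (upP n c).image (· + n) ↔ n < x ∧ x ∈ c := by
  rw [mem_shift_iff' (fun y hy => (mem_upP.mp hy).1)]
  rw [mem_upP]
  constructor
  · rintro ⟨h1, h2, h3⟩
    have hxx : x - n + n = x := by omega
    rw [hxx] at h3
    exact ⟨h1, h3⟩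
  · rintro ⟨h1, h2⟩
    refine ⟨h1, by omega, ?_⟩
    have hxx : x - n + n = x := by omega
    rwa [hxx]

lemma shift_upP_eq {n : ℕ} {c : Finset ℕ} (h : ∀ x ∈ c, n < x) :
    (upP n c).image (· + n) = c := by
  ext x
  rw [mem_shift_upP]
  exact ⟨fun hh => hh.2, fun hx => ⟨h x hx, hx⟩⟩

lemma lowP_shift_upP {n : ℕ} (c : Finset ℕ) : lowP n ((upP n c).image (· + n)) = ∅ := by
  ext x
  rw [mem_lowP, mem_shift_upP]
  simp only [Finset.notMem_empty, iff_false]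
  rintro ⟨⟨h1, _⟩, _, h4⟩
  omega

lemma upP_shift_upP {n : ℕ} (c : Finset ℕ) : upP n ((upP n c).image (· + n)) = upP n c := by
  ext x
  rw [mem_upP, mem_shift_upP, mem_upP]
  constructor
  · rintro ⟨h1, _, h3⟩
    exact ⟨h1, h3⟩
  · rintro ⟨h1, h2⟩
    exact ⟨h1, by omega, h2⟩

lemma part_dichotomy {n N : ℕ} {C : Finset (Finset ℕ)} (hC : IsSetPartition N C)
    {c : Finset ℕ} (hc : c ∈ C) (hnc : ¬((lowP n c).Nonempty ∧ (upP n c).Nonempty)) :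
    c ⊆ ground n ∨ ∀ x ∈ c, n < x := by
  by_cases hl : (lowP n c).Nonempty
  · left
    intro x hx
    have h1 := elems_ge_one hC c hc x hx
    by_contra hxg
    have hxn : n < x := by
      rcases mem_ground (n := n) (x := x) with _
      by_contra hh
      exact hxg (mem_ground.mpr ⟨h1, by omega⟩)
    refine hnc ⟨hl, ⟨x - n, mem_upP.mpr ⟨by omega, ?_⟩⟩⟩
    have : x - n + n = x := by omega
    rwa [this]
  · right
    intro x hx
    by_contra hh
    exact hl ⟨x, mem_lowP.mpr ⟨hx, elems_ge_one hC c hc x hx, by omega⟩⟩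

lemma split_eq_of_nocross {n k : ℕ} {C : Finset (Finset ℕ)} (hC : IsSetPartition (n + k) C)
    (h0 : ∀ c ∈ C, ¬((lowP n c).Nonempty ∧ (upP n c).Nonempty)) :
    concatP n (lowerP n C) (upperP n C) = C := by
  ext z
  simp only [concatP, shiftP, lowerP, upperP, Finset.mem_union, Finset.mem_filter,
    Finset.mem_image]
  constructor
  · rintro (⟨⟨c, hc, rfl⟩, hz⟩ | ⟨w, ⟨⟨c, hc, rfl⟩, hw⟩, rfl⟩)
    · rcases part_dichotomy hC hc (h0 c hc) with hlow | hup
      · rwa [lowP_of_subset hlow]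
      · exfalso
        obtain ⟨x, hx⟩ := hz
        obtain ⟨hx1, _, _⟩ := mem_lowP.mp hx
        have := hup x hx1
        obtain ⟨_, _, h4⟩ := mem_lowP.mp hx
        omega
    · rcases part_dichotomy hC hc (h0 c hc) with hlow | hup
      · exfalso
        obtain ⟨x, hx⟩ := hw
        obtain ⟨_, hx2⟩ := mem_upP.mp hx
        have := mem_ground.mp (hlow hx2)
        omega
      · rwa [shift_upP_eq hup]
  · intro hz
    rcases part_dichotomy hC hz (h0 z hz) with hlow | hup
    · left
      exact ⟨⟨z, hz, lowP_of_subset hlow⟩, hC.1 z hz⟩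
    · right
      refine ⟨upP n z, ⟨⟨z, hz, rfl⟩, ?_⟩, shift_upP_eq hup⟩
      rw [← Finset.image_nonempty (f := (· + n)), shift_upP_eq hup]
      exact hC.1 z hz

lemma leStar_split {n k : ℕ} : ∀ (m : ℕ) (C : Finset (Finset ℕ)), IsSetPartition (n + k) C →
    (C.filter fun c => (lowP n c).Nonempty ∧ (upP n c).Nonempty).card = m →
    leStar (concatP n (lowerP n C) (upperP n C)) C := by
  intro m
  induction m using Nat.strong_induction_on with
  | _ m ih =>
  intro C hC hm
  by_cases h0 : ∀ c ∈ C, ¬((lowP n c).Nonempty ∧ (upP n c).Nonempty)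
  · rw [split_eq_of_nocross hC h0]
    exact Relation.ReflTransGen.refl
  · push_neg at h0
    obtain ⟨c, hc, hlne, hune⟩ := h0
    have ha'ne : ((upP n c).image (· + n)).Nonempty := by rwa [Finset.image_nonempty]
    have hsplit : lowP n c ∪ (upP n c).image (· + n) = c := by
      ext x
      rw [Finset.mem_union, mem_lowP, mem_shift_upP]
      constructor
      · rintro (⟨h1, _, _⟩ | ⟨_, h2⟩) <;> assumption
      · intro hx
        have h1 := elems_ge_one hC c hc x hx
        by_cases hxn : x ≤ n
        · exact Or.inl ⟨hx, h1, hxn⟩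
        · exact Or.inr ⟨by omega, hx⟩
    have haa'_lt : ∀ x ∈ lowP n c, ∀ y ∈ (upP n c).image (· + n), x < y := by
      intro x hx y hy
      obtain ⟨_, _, h3⟩ := mem_lowP.mp hx
      obtain ⟨h4, _⟩ := mem_shift_upP.mp hy
      omega
    have hane_a' : lowP n c ≠ (upP n c).image (· + n) := by
      intro hh
      obtain ⟨x, hx⟩ := hlne
      have := haa'_lt x hx x (hh ▸ hx)
      omega
    have hanotC : lowP n c ∉ C := by
      intro hmem
      have hac : lowP n c ≠ c := by
        intro hh
        obtain ⟨y, hy⟩ := hune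
        have hyc : y + n ∈ c := (mem_upP.mp hy).2
        have h5 : y + n ∈ lowP n c := by rw [hh]; exact hyc
        obtain ⟨_, _, h3⟩ := mem_lowP.mp h5
        have := (mem_upP.mp hy).1
        omega
      have hdis := hC.2.1 _ hmem c hc hac
      obtain ⟨x, hx⟩ := hlne
      exact (Finset.disjoint_left.mp hdis) hx ((mem_lowP.mp hx).1)
    have ha'notC : (upP n c).image (· + n) ∉ C := by
      intro hmem
      have hac : (upP n c).image (· + n) ≠ c := by
        intro hh
        obtain ⟨x, hx⟩ := hlne
        have hxc : x ∈ c := (mem_lowP.mp hx).1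
        have h5 : x ∈ (upP n c).image (· + n) := by rw [hh]; exact hxc
        obtain ⟨h1, _⟩ := mem_shift_upP.mp h5
        have := (mem_lowP.mp hx).2.2
        omega
      have hdis := hC.2.1 _ hmem c hc hac
      obtain ⟨y, hy⟩ := ha'ne
      exact (Finset.disjoint_left.mp hdis) hy
        (by rw [← hsplit]; exact Finset.mem_union_right _ hy)
    have hmemC' : ∀ b ∈ insert (lowP n c) (insert ((upP n c).image (· + n)) (C.erase c)),
        b = lowP n c ∨ b = (upP n c).image (· + n) ∨ (b ∈ C ∧ b ≠ c) := by
      intro b hb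
      rcases Finset.mem_insert.mp hb with rfl | hb
      · exact Or.inl rfl
      · rcases Finset.mem_insert.mp hb with rfl | hb
        · exact Or.inr (Or.inl rfl)
        · exact Or.inr (Or.inr ⟨Finset.mem_of_mem_erase hb, (Finset.mem_erase.mp hb).1⟩)
    have hsubc : lowP n c ⊆ c := Finset.inter_subset_left
    have ha'subc : (upP n c).image (· + n) ⊆ c := fun x hx => (mem_shift_upP.mp hx).2
    have hdisj_aa' : Disjoint (lowP n c) ((upP n c).image (· + n)) := by
      rw [Finset.disjoint_left]
      intro x hx hx'
      have := haa'_lt x hx x hx'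
      omega
    have hC' : IsSetPartition (n + k)
        (insert (lowP n c) (insert ((upP n c).image (· + n)) (C.erase c))) := by
      refine ⟨?_, ?_, ?_⟩
      · intro b hb
        rcases hmemC' b hb with rfl | rfl | ⟨hb', _⟩
        · exact hlne
        · exact ha'ne
        · exact hC.1 b hb'
      · intro b hb d hd hbd
        rcases hmemC' b hb with rfl | rfl | ⟨hb', hbc⟩ <;>
          rcases hmemC' d hd with rfl | rfl | ⟨hd', hdc⟩
        · exact absurd rfl hbd
        · exact hdisj_aa'
        · exact ((hC.2.1 c hc d hd' (Ne.symm hdc)).mono_left hsubc)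
        · exact hdisj_aa'.symm
        · exact absurd rfl hbd
        · exact ((hC.2.1 c hc d hd' (Ne.symm hdc)).mono_left ha'subc)
        · exact ((hC.2.1 c hc b hb' (Ne.symm hbc)).mono_left hsubc).symm
        · exact ((hC.2.1 c hc b hb' (Ne.symm hbc)).mono_left ha'subc).symm
        · exact hC.2.1 b hb' d hd' hbd
      · apply le_antisymm
        · apply Finset.sup_le
          intro b hb
          rcases hmemC' b hb with rfl | rfl | ⟨hb', _⟩
          · exact le_trans hsubc (part_subset_ground hC hc)
          · exact le_trans ha'subc (part_subset_ground hC hc)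
          · exact part_subset_ground hC hb'
        · intro x hx
          obtain ⟨b, hb, hxb⟩ := exists_part hC hx
          by_cases hbc : b = c
          · rw [hbc] at hxb
            rw [← hsplit] at hxb
            rcases Finset.mem_union.mp hxb with hxb | hxb
            · exact Finset.mem_sup.mpr ⟨lowP n c, Finset.mem_insert_self _ _, hxb⟩
            · exact Finset.mem_sup.mpr ⟨(upP n c).image (· + n),
                Finset.mem_insert_of_mem (Finset.mem_insert_self _ _), hxb⟩
          · exact Finset.mem_sup.mpr ⟨b, Finset.mem_insert_of_mem (Finset.mem_insert_of_mem
              (Finset.mem_erase.mpr ⟨hbc, hb⟩)), hxb⟩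
    have hcov : coverStar
        (insert (lowP n c) (insert ((upP n c).image (· + n)) (C.erase c))) C := by
      refine ⟨lowP n c, Finset.mem_insert_self _ _, (upP n c).image (· + n),
        Finset.mem_insert_of_mem (Finset.mem_insert_self _ _), hane_a', haa'_lt, ?_⟩
      have h1 : (insert (lowP n c) (insert ((upP n c).image (· + n)) (C.erase c))).erase
          (lowP n c) = insert ((upP n c).image (· + n)) (C.erase c) := by
        apply Finset.erase_insert
        intro hmem
        rcases Finset.mem_insert.mp hmem with hh | hh
        · exact hane_a' hh
        · exact hanotC (Finset.mem_of_mem_erase hh)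
      have h2 : (insert ((upP n c).image (· + n)) (C.erase c)).erase
          ((upP n c).image (· + n)) = C.erase c := by
        apply Finset.erase_insert
        intro hmem
        exact ha'notC (Finset.mem_of_mem_erase hmem)
      rw [h1, h2, hsplit, Finset.insert_erase hc]
    have hlow : lowerP n (insert (lowP n c) (insert ((upP n c).image (· + n)) (C.erase c)))
        = lowerP n C := by
      ext z
      simp only [lowerP, Finset.mem_filter, Finset.mem_image]
      constructor
      · rintro ⟨⟨b, hb, rfl⟩, hz⟩
        rcases hmemC' b hb with rfl | rfl | ⟨hb', _⟩
        · exact ⟨⟨c, hc, (lowP_idem (n := n) c).symm⟩, hz⟩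
        · rw [lowP_shift_upP] at hz
          exact absurd rfl hz.ne_empty
        · exact ⟨⟨b, hb', rfl⟩, hz⟩
      · rintro ⟨⟨b, hb, rfl⟩, hz⟩
        by_cases hbc : b = c
        · subst hbc
          exact ⟨⟨lowP n b, Finset.mem_insert_self _ _, lowP_idem b⟩, hz⟩
        · exact ⟨⟨b, Finset.mem_insert_of_mem (Finset.mem_insert_of_mem
            (Finset.mem_erase.mpr ⟨hbc, hb⟩)), rfl⟩, hz⟩
    have hup : upperP n (insert (lowP n c) (insert ((upP n c).image (· + n)) (C.erase c)))
        = upperP n C := by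
      ext z
      simp only [upperP, Finset.mem_filter, Finset.mem_image]
      constructor
      · rintro ⟨⟨b, hb, rfl⟩, hz⟩
        rcases hmemC' b hb with rfl | rfl | ⟨hb', _⟩
        · rw [upP_lowP] at hz
          exact absurd rfl hz.ne_empty
        · exact ⟨⟨c, hc, (upP_shift_upP (n := n) c).symm⟩, hz⟩
        · exact ⟨⟨b, hb', rfl⟩, hz⟩
      · rintro ⟨⟨b, hb, rfl⟩, hz⟩
        by_cases hbc : b = c
        · subst hbc
          exact ⟨⟨(upP n b).image (· + n),
            Finset.mem_insert_of_mem (Finset.mem_insert_self _ _), upP_shift_upP b⟩, hz⟩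
        · exact ⟨⟨b, Finset.mem_insert_of_mem (Finset.mem_insert_of_mem
            (Finset.mem_erase.mpr ⟨hbc, hb⟩)), rfl⟩, hz⟩
    have hfilter : (insert (lowP n c) (insert ((upP n c).image (· + n)) (C.erase c))).filter
          (fun b => (lowP n b).Nonempty ∧ (upP n b).Nonempty)
        = (C.filter (fun b => (lowP n b).Nonempty ∧ (upP n b).Nonempty)).erase c := by
      ext z
      simp only [Finset.mem_filter, Finset.mem_erase]
      constructor
      · rintro ⟨hz, hcr⟩
        rcases hmemC' z hz with rfl | rfl | ⟨hz', hzc⟩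
        · rw [upP_lowP] at hcr
          exact absurd rfl hcr.2.ne_empty
        · rw [lowP_shift_upP] at hcr
          exact absurd rfl hcr.1.ne_empty
        · exact ⟨hzc, hz', hcr⟩
      · rintro ⟨hzc, hz, hcr⟩
        exact ⟨Finset.mem_insert_of_mem (Finset.mem_insert_of_mem
          (Finset.mem_erase.mpr ⟨hzc, hz⟩)), hcr⟩
    have hcmem : c ∈ C.filter (fun b => (lowP n b).Nonempty ∧ (upP n b).Nonempty) :=
      Finset.mem_filter.mpr ⟨hc, hlne, hune⟩
    have hmpos : 0 < m := by
      rw [← hm]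
      exact Finset.card_pos.mpr ⟨c, hcmem⟩
    have hcard : ((insert (lowP n c) (insert ((upP n c).image (· + n)) (C.erase c))).filter
          (fun b => (lowP n b).Nonempty ∧ (upP n b).Nonempty)).card = m - 1 := by
      rw [hfilter, Finset.card_erase_of_mem hcmem, hm]
    have hle := ih (m - 1) (by omega) _ hC' hcard
    rw [hlow, hup] at hle
    exact hle.tail hcov
/-! ### the order characterization -/

lemma leStar_concat_iff {n k : ℕ} {A B C : Finset (Finset ℕ)}
    (hA : IsSetPartition n A) (hB : IsSetPartition k B) (hC : IsSetPartition (n + k) C) :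
    leStar (concatP n A B) C ↔ leStar A (lowerP n C) ∧ leStar B (upperP n C) := by
  constructor
  · intro h
    have h1 := leStar_lowerP (n := n) (isSetPartition_concatP hA hB) h
    have h2 := leStar_upperP (n := n) (isSetPartition_concatP hA hB) h
    rw [lowerP_concatP_self hA hB] at h1
    rw [upperP_concatP_self hA hB] at h2
    exact ⟨h1, h2⟩
  · rintro ⟨h1, h2⟩
    have hlowp := isSetPartition_lowerP hC
    have s1 : leStar (concatP n A B) (concatP n (lowerP n C) B) := leStar_concat_left hA hB h1
    have s2 : leStar (concatP n (lowerP n C) B) (concatP n (lowerP n C) (upperP n C)) :=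
      leStar_concat_right hlowp hB h2
    exact (s1.trans s2).trans (leStar_split _ C hC rfl)

/-! ### the meet computation -/

lemma inter_shift_ground {n k : ℕ} {c : Finset ℕ} (hc : c ⊆ ground (n + k)) :
    c ∩ (ground k).image (· + n) = (upP n c).image (· + n) := by
  ext x
  rw [Finset.mem_inter, mem_shift_upP, mem_shift_iff' (fun y hy => (mem_ground.mp hy).1)]
  constructor
  · rintro ⟨h1, h2, h3⟩
    exact ⟨h2, h1⟩
  · rintro ⟨h1, h2⟩
    have h3 := mem_ground.mp (hc h2)
    exact ⟨h2, h1, mem_ground.mpr ⟨by omega, by omega⟩⟩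

lemma meetP_eq_split {n k : ℕ} {C : Finset (Finset ℕ)} (hC : IsSetPartition (n + k) C) :
    meetP C (concatP n (onePartP n) (onePartP k)) = concatP n (lowerP n C) (upperP n C) := by
  have hJ : ∀ j, j ∈ concatP n (onePartP n) (onePartP k) ↔
      (n ≠ 0 ∧ j = ground n) ∨ (k ≠ 0 ∧ j = (ground k).image (· + n)) := by
    intro j
    simp only [concatP, shiftP, onePartP, Finset.mem_union, Finset.mem_image]
    constructor
    · rintro (hj | ⟨b, hb, rfl⟩)
      · by_cases hn : n = 0
        · simp [hn] at hj
        · simp [hn] at hj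
          exact Or.inl ⟨hn, hj⟩
      · by_cases hk : k = 0
        · simp [hk] at hb
        · simp [hk] at hb
          subst hb
          exact Or.inr ⟨hk, rfl⟩
    · rintro (⟨hn, rfl⟩ | ⟨hk, rfl⟩)
      · left
        simp [hn]
      · right
        exact ⟨ground k, by simp [hk], rfl⟩
  ext z
  constructor
  · intro hz
    obtain ⟨hz1, hz2⟩ := Finset.mem_filter.mp hz
    obtain ⟨pp, hpp, rfl⟩ := Finset.mem_image.mp hz1
    obtain ⟨hc, hj⟩ := Finset.mem_product.mp hpp
    rcases (hJ pp.2).mp hj with ⟨hn, hj2⟩ | ⟨hk, hj2⟩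
    · rw [hj2] at hz2 ⊢
      exact Finset.mem_union_left _
        (Finset.mem_filter.mpr ⟨Finset.mem_image.mpr ⟨pp.1, hc, rfl⟩, hz2⟩)
    · rw [hj2] at hz2 ⊢
      rw [inter_shift_ground (part_subset_ground hC hc)] at hz2 ⊢
      refine Finset.mem_union_right _ ?_
      refine Finset.mem_image.mpr ⟨upP n pp.1,
        Finset.mem_filter.mpr ⟨Finset.mem_image.mpr ⟨pp.1, hc, rfl⟩, ?_⟩, rfl⟩
      rwa [Finset.image_nonempty] at hz2
  · intro hz
    rcases Finset.mem_union.mp hz with hz | hz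
    · obtain ⟨hz1, hz2⟩ := Finset.mem_filter.mp hz
      obtain ⟨c, hc, rfl⟩ := Finset.mem_image.mp hz1
      have hn : n ≠ 0 := by
        intro hn
        subst hn
        obtain ⟨x, hx⟩ := hz2
        obtain ⟨_, h1, h2⟩ := mem_lowP.mp hx
        omega
      exact Finset.mem_filter.mpr ⟨Finset.mem_image.mpr ⟨(c, ground n),
        Finset.mem_product.mpr ⟨hc, (hJ _).mpr (Or.inl ⟨hn, rfl⟩)⟩, rfl⟩, hz2⟩
    · obtain ⟨w, hw, rfl⟩ := Finset.mem_image.mp hz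
      obtain ⟨hw1, hw2⟩ := Finset.mem_filter.mp hw
      obtain ⟨c, hc, rfl⟩ := Finset.mem_image.mp hw1
      have hk : k ≠ 0 := by
        intro hk
        subst hk
        obtain ⟨x, hx⟩ := hw2
        obtain ⟨h1, h2⟩ := mem_upP.mp hx
        have := mem_ground.mp (part_subset_ground hC hc h2)
        omega
      exact Finset.mem_filter.mpr ⟨Finset.mem_image.mpr ⟨(c, (ground k).image (· + n)),
        Finset.mem_product.mpr ⟨hc, (hJ _).mpr (Or.inr ⟨hk, rfl⟩)⟩,
        inter_shift_ground (part_subset_ground hC hc)⟩, hw2.image _⟩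

lemma meetP_cond_iff {n k : ℕ} {A B C : Finset (Finset ℕ)}
    (hA : IsSetPartition n A) (hB : IsSetPartition k B) (hC : IsSetPartition (n + k) C) :
    meetP C (concatP n (onePartP n) (onePartP k)) = concatP n A B ↔
      lowerP n C = A ∧ upperP n C = B := by
  rw [meetP_eq_split hC]
  constructor
  · intro h
    exact concatP_injective (isSetPartition_lowerP hC) hA (isSetPartition_upperP hC) hB h
  · rintro ⟨h1, h2⟩
    rw [h1, h2]

/-! ### atomic factorization: existence and uniqueness -/

lemma partition_of_atoms : ∀ (L : List (ℕ × Finset (Finset ℕ))),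
    (∀ p ∈ L, AtomicP p.1 p.2) → IsSetPartition (concatListP L).1 (concatListP L).2 := by
  intro L
  induction L with
  | nil => intro _; simpa [concatListP] using isSetPartition_empty
  | cons p L ih =>
    intro h
    have hp := (h p (List.mem_cons_self)).1
    have hL := ih (fun r hr => h r (List.mem_cons_of_mem _ hr))
    have := isSetPartition_concatP hp hL
    show IsSetPartition ((concatListP L).1 + p.1) (concatP p.1 p.2 (concatListP L).2)
    rwa [Nat.add_comm]

lemma exists_atomic_factorization : ∀ (n : ℕ) (A : Finset (Finset ℕ)), IsSetPartition n A →
    ∃ L, AtomicFactorization n A L := by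
  intro n
  induction n using Nat.strong_induction_on with
  | _ n ih =>
  intro A hA
  rcases Nat.eq_zero_or_pos n with rfl | hn
  · exact ⟨[], by simp, by simp [concatListP, isSetPartition_zero hA]⟩
  by_cases hatom : AtomicP n A
  · refine ⟨[(n, A)], by simpa using hatom, ?_⟩
    show ((concatListP []).1 + n, concatP n A (concatListP []).2) = (n, A)
    simp [concatListP, concatP_empty]
  · have hex : ∃ kk, 0 < kk ∧ kk < n ∧ ∃ B C, IsSetPartition kk B ∧
        IsSetPartition (n - kk) C ∧ A = concatP kk B C := by
      by_contra hne
      refine hatom ⟨hA, hn, ?_⟩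
      rintro ⟨kk, B, C, h1, h2, h3, h4, h5⟩
      exact hne ⟨kk, h1, h2, B, C, h3, h4, h5⟩
    obtain ⟨hk0pos, hk0lt, B, C, hBp, hCp, hACeq⟩ := Nat.find_spec hex
    have hBatom : AtomicP (Nat.find hex) B := by
      refine ⟨hBp, hk0pos, ?_⟩
      rintro ⟨j, B1, B2, hj0, hjk, hB1, hB2, rfl⟩
      have hassoc : concatP (Nat.find hex) (concatP j B1 B2) C
          = concatP j B1 (concatP (j + (Nat.find hex - j) - j) B2 C) := by
        have hjj : j + (Nat.find hex - j) = Nat.find hex := by omega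
        rw [← hjj, concatP_assoc]
        congr 2
        omega
      refine Nat.find_min hex hjk ⟨hj0, by omega, B1, concatP (Nat.find hex - j) B2 C, hB1, ?_, ?_⟩
      · have h2 := isSetPartition_concatP hB2 hCp
        have harith : (Nat.find hex - j) + (n - Nat.find hex) = n - j := by omega
        rwa [harith] at h2
      · have hjj2 : j + (Nat.find hex - j) - j = Nat.find hex - j := by omega
        exact hACeq.trans (hassoc.trans (by rw [hjj2]))
    obtain ⟨L', hL'atoms, hL'concat⟩ := ih (n - Nat.find hex) (by omega) C hCp
    refine ⟨(Nat.find hex, B) :: L', ?_, ?_⟩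
    · intro r hr
      rcases List.mem_cons.mp hr with rfl | hr
      · exact hBatom
      · exact hL'atoms r hr
    · show ((concatListP L').1 + Nat.find hex, concatP (Nat.find hex) B (concatListP L').2)
        = (n, A)
      have e1 : (concatListP L').1 = n - Nat.find hex := by rw [hL'concat]
      have e2 : (concatListP L').2 = C := by rw [hL'concat]
      rw [e1, e2, ← hACeq]
      congr 1
      omega

lemma first_factor_le {p q : ℕ × Finset (Finset ℕ)} {L M : List (ℕ × Finset (Finset ℕ))}
    (hp : AtomicP p.1 p.2) (hq : AtomicP q.1 q.2)
    (hL : ∀ r ∈ L, AtomicP r.1 r.2) (hM : ∀ r ∈ M, AtomicP r.1 r.2)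
    (h : concatListP (p :: L) = concatListP (q :: M)) : q.1 ≤ p.1 := by
  by_contra hlt
  push_neg at hlt
  have hCL := partition_of_atoms L hL
  have hCM := partition_of_atoms M hM
  have h1 : (concatListP L).1 + p.1 = (concatListP M).1 + q.1 := congrArg Prod.fst h
  have h2 : concatP p.1 p.2 (concatListP L).2 = concatP q.1 q.2 (concatListP M).2 :=
    congrArg Prod.snd h
  have hCL' : IsSetPartition ((q.1 - p.1) + ((concatListP L).1 - (q.1 - p.1)))
      (concatListP L).2 := by
    have harith : (q.1 - p.1) + ((concatListP L).1 - (q.1 - p.1)) = (concatListP L).1 := by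
      omega
    rwa [harith]
  have hlowCL := isSetPartition_lowerP hCL'
  have hq2eq : q.2 = concatP p.1 p.2 (lowerP (q.1 - p.1) (concatListP L).2) := by
    have w2 := lowerP_concatP (k := p.1) (j := q.1 - p.1) (B := p.2) (C := (concatListP L).2)
      (fun a ha => part_subset_ground hp.1 ha) hp.1.1 (elems_ge_one hCL)
    have harith : p.1 + (q.1 - p.1) = q.1 := by omega
    rw [harith] at w2
    have w1 : lowerP q.1 (concatP q.1 q.2 (concatListP M).2) = q.2 :=
      lowerP_concatP_self hq.1 hCM
    rw [← w1, ← h2, w2]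
  exact hq.2.2 ⟨p.1, p.2, lowerP (q.1 - p.1) (concatListP L).2, hp.2.1, hlt, hp.1,
    hlowCL, hq2eq⟩

lemma concatListP_injective : ∀ (L M : List (ℕ × Finset (Finset ℕ))),
    (∀ p ∈ L, AtomicP p.1 p.2) → (∀ p ∈ M, AtomicP p.1 p.2) →
    concatListP L = concatListP M → L = M := by
  intro L
  induction L with
  | nil =>
    intro M hL hM h
    cases M with
    | nil => rfl
    | cons q M =>
      exfalso
      have h1 : (0 : ℕ) = (concatListP M).1 + q.1 := congrArg Prod.fst h
      have := (hM q (List.mem_cons_self)).2.1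
      omega
  | cons p L ih =>
    intro M hL hM h
    cases M with
    | nil =>
      exfalso
      have h1 : (concatListP L).1 + p.1 = (0 : ℕ) := congrArg Prod.fst h
      have := (hL p (List.mem_cons_self)).2.1
      omega
    | cons q M =>
      have hp := hL p (List.mem_cons_self)
      have hq := hM q (List.mem_cons_self)
      have hL' : ∀ r ∈ L, AtomicP r.1 r.2 := fun r hr => hL r (List.mem_cons_of_mem _ hr)
      have hM' : ∀ r ∈ M, AtomicP r.1 r.2 := fun r hr => hM r (List.mem_cons_of_mem _ hr)
      have heq1 : p.1 = q.1 :=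
        le_antisymm (first_factor_le hq hp hM' hL' h.symm) (first_factor_le hp hq hL' hM' h)
      have hCL := partition_of_atoms L hL'
      have hCM := partition_of_atoms M hM'
      have h2 : concatP p.1 p.2 (concatListP L).2 = concatP q.1 q.2 (concatListP M).2 :=
        congrArg Prod.snd h
      have h1 : (concatListP L).1 + p.1 = (concatListP M).1 + q.1 := congrArg Prod.fst h
      have hsz : (concatListP L).1 = (concatListP M).1 := by omega
      rw [← heq1] at h2
      have hq1 : IsSetPartition p.1 q.2 := by rw [heq1]; exact hq.1
      have hCM' : IsSetPartition (concatListP L).1 (concatListP M).2 := by rwa [hsz]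
      obtain ⟨e1, e2⟩ := concatP_injective hp.1 hq1 hCL hCM' h2
      have hLM : L = M := ih M hL' hM' (Prod.ext_iff.mpr ⟨hsz, e2⟩)
      rw [hLM, Prod.ext_iff.mpr (⟨heq1, e1⟩ : p.1 = q.1 ∧ p.2 = q.2)]
/-! ### the q basis -/

lemma mem_SPs {n : ℕ} {P : Finset (Finset ℕ) → Prop} {A : Finset (Finset ℕ)} :
    A ∈ SPs n P ↔ IsSetPartition n A ∧ P A := by
  rw [SPs, Finset.mem_filter]
  constructor
  · rintro ⟨_, h⟩
    exact h
  · intro h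
    refine ⟨Finset.mem_powerset.mpr ?_, h⟩
    intro b hb
    exact Finset.mem_powerset.mpr (part_subset_ground h.1 hb)

lemma SPs_zero {P : Finset (Finset ℕ) → Prop} (hP : P ∅) : SPs 0 P = {∅} := by
  ext A
  rw [mem_SPs, Finset.mem_singleton]
  constructor
  · rintro ⟨h1, _⟩
    exact isSetPartition_zero h1
  · rintro rfl
    exact ⟨isSetPartition_empty, hP⟩

section Algebra

variable {R : Type*} [Ring R] [Algebra ℚ R] (m : ℕ → Finset (Finset ℕ) → R)

/-- The q basis element. -/
def qsum (n : ℕ) (A : Finset (Finset ℕ)) : R := ∑ B ∈ SPs n (fun B => leStar A B), m n B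

lemma qsum_empty (hone : m 0 ∅ = 1) : qsum m 0 ∅ = 1 := by
  rw [qsum, SPs_zero (P := fun B => leStar ∅ B) Relation.ReflTransGen.refl,
    Finset.sum_singleton, hone]

lemma qsum_mul
    (hmul : ∀ n k A B, IsSetPartition n A → IsSetPartition k B →
      m n A * m k B =
        ∑ C ∈ SPs (n + k)
            (fun C => meetP C (concatP n (onePartP n) (onePartP k)) = concatP n A B),
          m (n + k) C)
    {n k : ℕ} {A B : Finset (Finset ℕ)}
    (hA : IsSetPartition n A) (hB : IsSetPartition k B) :
    qsum m n A * qsum m k B = qsum m (n + k) (concatP n A B) := by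
  have key : ∀ A' ∈ SPs n (fun B' => leStar A B'), ∀ B' ∈ SPs k (fun B' => leStar B B'),
      SPs (n + k) (fun C => meetP C (concatP n (onePartP n) (onePartP k)) = concatP n A' B')
      = (SPs (n + k) (fun C => leStar (concatP n A B) C)).filter
          (fun C => (lowerP n C, upperP n C) = (A', B')) := by
    intro A' hA' B' hB'
    obtain ⟨hA'p, hA'le⟩ := mem_SPs.mp hA'
    obtain ⟨hB'p, hB'le⟩ := mem_SPs.mp hB'
    ext C
    rw [Finset.mem_filter, mem_SPs, mem_SPs]
    constructor
    · rintro ⟨hCp, hCm⟩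
      obtain ⟨hl, hu⟩ := (meetP_cond_iff hA'p hB'p hCp).mp hCm
      refine ⟨⟨hCp, ?_⟩, ?_⟩
      · exact (leStar_concat_iff hA hB hCp).mpr
          ⟨by rw [hl]; exact hA'le, by rw [hu]; exact hB'le⟩
      · rw [Prod.ext_iff]
        exact ⟨hl, hu⟩
    · rintro ⟨⟨hCp, _⟩, hpair⟩
      obtain ⟨hl, hu⟩ := Prod.ext_iff.mp hpair
      exact ⟨hCp, (meetP_cond_iff hA'p hB'p hCp).mpr ⟨hl, hu⟩⟩
  calc qsum m n A * qsum m k B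
      = ∑ A' ∈ SPs n (fun B' => leStar A B'), ∑ B' ∈ SPs k (fun B' => leStar B B'),
          m n A' * m k B' := by
        rw [qsum, qsum, Finset.sum_mul_sum]
    _ = ∑ A' ∈ SPs n (fun B' => leStar A B'), ∑ B' ∈ SPs k (fun B' => leStar B B'),
          ∑ C ∈ (SPs (n + k) (fun C => leStar (concatP n A B) C)).filter
            (fun C => (lowerP n C, upperP n C) = (A', B')), m (n + k) C := by
        refine Finset.sum_congr rfl fun A' hA' => Finset.sum_congr rfl fun B' hB' => ?_
        rw [hmul n k A' B' (mem_SPs.mp hA').1 (mem_SPs.mp hB').1, key A' hA' B' hB']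
    _ = ∑ y ∈ (SPs n (fun B' => leStar A B')) ×ˢ (SPs k (fun B' => leStar B B')),
          ∑ C ∈ (SPs (n + k) (fun C => leStar (concatP n A B) C)).filter
            (fun C => (lowerP n C, upperP n C) = y), m (n + k) C := by
        rw [Finset.sum_product]
    _ = ∑ C ∈ SPs (n + k) (fun C => leStar (concatP n A B) C), m (n + k) C := by
        apply Finset.sum_fiberwise_of_maps_to
        intro C hC
        obtain ⟨hCp, hCle⟩ := mem_SPs.mp hC
        obtain ⟨h1, h2⟩ := (leStar_concat_iff hA hB hCp).mp hCle
        exact Finset.mem_product.mpr ⟨mem_SPs.mpr ⟨isSetPartition_lowerP hCp, h1⟩,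
          mem_SPs.mpr ⟨isSetPartition_upperP hCp, h2⟩⟩
    _ = qsum m (n + k) (concatP n A B) := rfl

lemma qsum_factor (hone : m 0 ∅ = 1)
    (hmul : ∀ n k A B, IsSetPartition n A → IsSetPartition k B →
      m n A * m k B =
        ∑ C ∈ SPs (n + k)
            (fun C => meetP C (concatP n (onePartP n) (onePartP k)) = concatP n A B),
          m (n + k) C) :
    ∀ (L : List (ℕ × Finset (Finset ℕ))) (n : ℕ) (A : Finset (Finset ℕ)),
    AtomicFactorization n A L →
    qsum m n A = (L.map fun p => qsum m p.1 p.2).prod := by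
  intro L
  induction L with
  | nil =>
    intro n A hfac
    obtain ⟨_, hc⟩ := hfac
    have h1 : (0 : ℕ) = n := congrArg Prod.fst hc
    have h2 : (∅ : Finset (Finset ℕ)) = A := congrArg Prod.snd hc
    subst h1
    subst h2
    rw [List.map_nil, List.prod_nil]
    exact qsum_empty m hone
  | cons p L ih =>
    intro n A hfac
    obtain ⟨hatoms, hc⟩ := hfac
    have hp := hatoms p (List.mem_cons_self)
    have hL : ∀ r ∈ L, AtomicP r.1 r.2 := fun r hr => hatoms r (List.mem_cons_of_mem _ hr)
    have hCL := partition_of_atoms L hL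
    have h1 : (concatListP L).1 + p.1 = n := congrArg Prod.fst hc
    have h2 : concatP p.1 p.2 (concatListP L).2 = A := congrArg Prod.snd hc
    have hihyp := ih (concatListP L).1 (concatListP L).2 ⟨hL, rfl⟩
    rw [List.map_cons, List.prod_cons, ← hihyp, qsum_mul m hmul hp.1 hCL]
    have h3 : p.1 + (concatListP L).1 = n := by omega
    rw [← h3, ← h2]

end Algebra
/-! ### the upper set of a partition in the index type -/

noncomputable def upSet (i : SPIdx) : Finset SPIdx :=
  (SPs i.1.1 (fun B => leStar i.1.2 B)).attach.image
    (fun B => ⟨(i.1.1, B.1), (mem_SPs.mp B.2).1⟩)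

lemma mem_upSet {i j : SPIdx} : j ∈ upSet i ↔ j.1.1 = i.1.1 ∧ leStar i.1.2 j.1.2 := by
  simp only [upSet, Finset.mem_image, Finset.mem_attach, true_and]
  constructor
  · rintro ⟨B, hB⟩
    subst hB
    exact ⟨rfl, (mem_SPs.mp B.2).2⟩
  · rintro ⟨h1, h2⟩
    have hjp : IsSetPartition i.1.1 j.1.2 := h1 ▸ j.2
    refine ⟨⟨j.1.2, mem_SPs.mpr ⟨hjp, h2⟩⟩, ?_⟩
    apply Subtype.ext
    exact Prod.ext_iff.mpr ⟨h1.symm, rfl⟩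

lemma mem_upSet_self (i : SPIdx) : i ∈ upSet i :=
  mem_upSet.mpr ⟨rfl, Relation.ReflTransGen.refl⟩

lemma upSet_card {i j : SPIdx} (hj : j ∈ upSet i) :
    j.1.2.card ≤ i.1.2.card ∧ (j ≠ i → j.1.2.card < i.1.2.card) := by
  obtain ⟨h1, h2⟩ := mem_upSet.mp hj
  obtain ⟨hp, hle, heq⟩ := leStar_partition i.2 h2
  refine ⟨hle, fun hne => ?_⟩
  rcases lt_or_eq_of_le hle with hlt | hceq
  · exact hlt
  · exfalso
    exact hne (Subtype.ext (Prod.ext_iff.mpr ⟨h1, heq hceq⟩))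
end NCSymProof

open NCSymProof

/-- in `NCSym` (any algebra with basis `m` satisfying the monomial product
rule) the basis `q_A = ∑_{B ≥_* A} m_B` is multiplicative on atomic factorizations:
if `A^! = (A^{(1)}, …, A^{(k)})` then `q_A = q_{A^{(1)}} ⋯ q_{A^{(k)}}`; consequently
`NCSym` is freely generated by `{q_A : A atomic}`. -/
theorem q_basis_multiplicative_free {R : Type*} [Ring R] [Algebra ℚ R]
    (m : ℕ → Finset (Finset ℕ) → R)
    (hone : m 0 ∅ = 1)
    (hmul : ∀ n k A B, IsSetPartition n A → IsSetPartition k B →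
      m n A * m k B =
        ∑ C ∈ SPs (n + k)
            (fun C => meetP C (concatP n (onePartP n) (onePartP k)) = concatP n A B),
          m (n + k) C)
    (hli : LinearIndependent ℚ (fun i : SPIdx => m i.1.1 i.1.2))
    (hspan : Submodule.span ℚ (Set.range fun i : SPIdx => m i.1.1 i.1.2) = ⊤) :
    (∀ (n : ℕ) (A : Finset (Finset ℕ)) (L : List (ℕ × Finset (Finset ℕ))),
      IsSetPartition n A → AtomicFactorization n A L →
      ∑ B ∈ SPs n (fun B => leStar A B), m n B =
        (L.map fun p => ∑ B ∈ SPs p.1 (fun B => leStar p.2 B), m p.1 B).prod) ∧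
    Function.Bijective
      ⇑(FreeAlgebra.lift ℚ
        (fun a : AtomIdx => ∑ B ∈ SPs a.1.1 (fun B => leStar a.1.2 B), m a.1.1 B) :
          FreeAlgebra ℚ AtomIdx →ₐ[ℚ] R) := by
  classical
  constructor
  · intro n A L _ hfac
    exact qsum_factor m hone hmul L n A hfac
  -- part 2: the free generation
  set Ψ : FreeAlgebra ℚ AtomIdx →ₐ[ℚ] R := FreeAlgebra.lift ℚ
    (fun a : AtomIdx => ∑ B ∈ SPs a.1.1 (fun B => leStar a.1.2 B), m a.1.1 B) with hΨdef
  let bm : Module.Basis SPIdx ℚ R := Module.Basis.mk hli hspan.ge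
  have hbm : ∀ i, bm i = m i.1.1 i.1.2 := fun i => Module.Basis.mk_apply _ _ i
  have hq_sum : ∀ i : SPIdx, qsum m i.1.1 i.1.2 = ∑ j ∈ upSet i, bm j := by
    intro i
    rw [upSet, Finset.sum_image (by
      intro x _ y _ hxy
      apply Subtype.ext
      have h := congrArg Subtype.val hxy
      exact (Prod.ext_iff.mp h).2)]
    rw [Finset.sum_congr rfl (fun B _ => hbm _)]
    exact (Finset.sum_attach _ _).symm
  -- linear independence of the q family
  have hqli : LinearIndependent ℚ (fun i : SPIdx => qsum m i.1.1 i.1.2) := by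
    rw [linearIndependent_iff]
    intro l hl
    by_contra hl0
    obtain ⟨i₁, hi₁⟩ := Finsupp.support_nonempty_iff.mpr hl0
    obtain ⟨i₀, hi₀s, hi₀max⟩ := Finset.exists_max_image
      (l.support.filter (fun j => j.1.1 = i₁.1.1)) (fun j => j.1.2.card)
      ⟨i₁, Finset.mem_filter.mpr ⟨hi₁, rfl⟩⟩
    obtain ⟨hi₀sup, hi₀n⟩ := Finset.mem_filter.mp hi₀s
    have hrepr : ∀ j : SPIdx, bm.repr (qsum m j.1.1 j.1.2) i₀
        = if i₀ ∈ upSet j then 1 else 0 := by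
      intro j
      rw [hq_sum j, map_sum, Finset.sum_apply']
      rw [Finset.sum_congr rfl (fun w _ => by rw [bm.repr_self, Finsupp.single_apply])]
      exact Finset.sum_ite_eq' _ _ _
    have hone' : ∀ j ∈ l.support,
        (if i₀ ∈ upSet j then (1 : ℚ) else 0) = if j = i₀ then 1 else 0 := by
      intro j hj
      by_cases hmem : i₀ ∈ upSet j
      · rw [if_pos hmem]
        obtain ⟨hn, hle⟩ := mem_upSet.mp hmem
        have hjn : j.1.1 = i₁.1.1 := by rw [← hi₀n, ← hn]
        have hjs : j ∈ l.support.filter (fun j => j.1.1 = i₁.1.1) :=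
          Finset.mem_filter.mpr ⟨hj, hjn⟩
        have hcard1 : j.1.2.card ≤ i₀.1.2.card := hi₀max j hjs
        obtain ⟨hp, hle2, heq⟩ := leStar_partition j.2 hle
        have hcardeq : i₀.1.2.card = j.1.2.card := le_antisymm hle2 hcard1
        have hji : j = i₀ := (Subtype.ext (Prod.ext_iff.mpr ⟨hn, heq hcardeq⟩)).symm
        rw [if_pos hji]
      · rw [if_neg hmem, if_neg]
        intro hji
        subst hji
        exact hmem (mem_upSet_self j)
    have hfinal : bm.repr (Finsupp.linearCombination ℚ
        (fun i : SPIdx => qsum m i.1.1 i.1.2) l) i₀ = l i₀ := by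
      rw [Finsupp.linearCombination_apply, Finsupp.sum, map_sum, Finset.sum_apply']
      rw [Finset.sum_congr rfl (fun j hj => by
        rw [map_smul, Finsupp.smul_apply, hrepr j, smul_eq_mul, hone' j hj, mul_ite,
          mul_one, mul_zero])]
      rw [Finset.sum_ite_eq' l.support i₀ (fun j => l j), if_pos hi₀sup]
    rw [hl, map_zero, Finsupp.coe_zero, Pi.zero_apply] at hfinal
    exact (Finsupp.mem_support_iff.mp hi₀sup) hfinal.symm
  -- the q family spans
  have hqspan : ∀ i : SPIdx, m i.1.1 i.1.2 ∈ Submodule.span ℚ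
      (Set.range (fun i : SPIdx => qsum m i.1.1 i.1.2)) := by
    suffices h : ∀ (c : ℕ) (i : SPIdx), i.1.2.card = c → m i.1.1 i.1.2 ∈ Submodule.span ℚ
        (Set.range (fun i : SPIdx => qsum m i.1.1 i.1.2)) from fun i => h _ i rfl
    intro c
    induction c using Nat.strong_induction_on with
    | _ c ih =>
    intro i hcard
    have hsplit : qsum m i.1.1 i.1.2 = bm i + ∑ j ∈ (upSet i).erase i, bm j := by
      rw [hq_sum i, ← Finset.add_sum_erase _ _ (mem_upSet_self i)]
    have hbmi : bm i = qsum m i.1.1 i.1.2 - ∑ j ∈ (upSet i).erase i, bm j := by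
      rw [hsplit]
      exact (add_sub_cancel_right _ _).symm
    rw [← hbm i, hbmi]
    apply Submodule.sub_mem
    · exact Submodule.subset_span ⟨i, rfl⟩
    · apply Submodule.sum_mem
      intro j hj
      have hj' := Finset.mem_of_mem_erase hj
      have hjne := (Finset.mem_erase.mp hj).1
      have hcardlt : j.1.2.card < i.1.2.card := (upSet_card hj').2 hjne
      rw [hbm j]
      exact ih j.1.2.card (by omega) j rfl
  have hqtop : ⊤ ≤ Submodule.span ℚ (Set.range (fun i : SPIdx => qsum m i.1.1 i.1.2)) := by
    rw [← hspan]
    apply Submodule.span_le.mpr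
    rintro _ ⟨i, rfl⟩
    exact hqspan i
  let qb : Module.Basis SPIdx ℚ R := Module.Basis.mk hqli hqtop
  -- the factorization bijection
  let e : FreeMonoid AtomIdx → SPIdx := fun w =>
    ⟨concatListP ((FreeMonoid.toList w).map Subtype.val),
      partition_of_atoms _ (fun p hp => by
        obtain ⟨a, _, rfl⟩ := List.mem_map.mp hp
        exact a.2)⟩
  have einj : Function.Injective e := by
    intro w w' hww
    have h1 : concatListP ((FreeMonoid.toList w).map Subtype.val)
        = concatListP ((FreeMonoid.toList w').map Subtype.val) := congrArg Subtype.val hww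
    have h2 := concatListP_injective _ _
      (fun p hp => by obtain ⟨a, _, rfl⟩ := List.mem_map.mp hp; exact a.2)
      (fun p hp => by obtain ⟨a, _, rfl⟩ := List.mem_map.mp hp; exact a.2) h1
    have h3 : FreeMonoid.toList w = FreeMonoid.toList w' :=
      (List.map_injective_iff.mpr Subtype.val_injective) h2
    exact FreeMonoid.toList.injective h3
  have esurj : Function.Surjective e := by
    intro i
    obtain ⟨L, hatoms, hconcat⟩ := exists_atomic_factorization i.1.1 i.1.2 i.2
    refine ⟨FreeMonoid.ofList (L.attach.map
      (fun p => (⟨p.1, hatoms p.1 p.2⟩ : AtomIdx))), ?_⟩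
    apply Subtype.ext
    show concatListP ((FreeMonoid.toList (FreeMonoid.ofList _)).map Subtype.val) = i.1
    rw [FreeMonoid.toList_ofList, List.map_map]
    have hcompo : (Subtype.val ∘ fun p : {x // x ∈ L} =>
        (⟨p.1, hatoms p.1 p.2⟩ : AtomIdx)) = Subtype.val := rfl
    rw [hcompo, List.attach_map_subtype_val, hconcat]
  let eE : FreeMonoid AtomIdx ≃ SPIdx := Equiv.ofBijective e ⟨einj, esurj⟩
  let bF := FreeAlgebra.basisFreeMonoid ℚ AtomIdx
  have hbF : ∀ w : FreeMonoid AtomIdx,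
      bF w = ((FreeMonoid.toList w).map (FreeAlgebra.ι ℚ)).prod := by
    intro w
    show FreeAlgebra.basisFreeMonoid ℚ AtomIdx w = _
    rw [FreeAlgebra.basisFreeMonoid, Module.Basis.map_apply, Finsupp.coe_basisSingleOne,
      LinearEquiv.symm_trans_apply]
    have h1 : (MonoidAlgebra.coeffLinearEquiv ℚ).symm (Finsupp.single w (1:ℚ))
        = MonoidAlgebra.of ℚ (FreeMonoid AtomIdx) w := by
      simp [MonoidAlgebra.of_apply]
    rw [h1]
    have h2 : (FreeAlgebra.equivMonoidAlgebraFreeMonoid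
          (R := ℚ) (X := AtomIdx)).toLinearEquiv.symm (MonoidAlgebra.of ℚ (FreeMonoid AtomIdx) w)
        = (MonoidAlgebra.lift ℚ (FreeAlgebra ℚ AtomIdx) (FreeMonoid AtomIdx))
            (FreeMonoid.lift (FreeAlgebra.ι ℚ)) (MonoidAlgebra.of ℚ (FreeMonoid AtomIdx) w) :=
      rfl
    exact h2.trans (by rw [MonoidAlgebra.lift_of, FreeMonoid.lift_apply])
  have hcomp : ∀ w : FreeMonoid AtomIdx, Ψ (bF w) = qsum m (e w).1.1 (e w).1.2 := by
    intro w
    rw [hbF w, map_list_prod, List.map_map]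
    have hΨι : (⇑Ψ ∘ FreeAlgebra.ι ℚ) = (fun a : AtomIdx => qsum m a.1.1 a.1.2) := by
      funext a
      exact FreeAlgebra.lift_ι_apply _ _
    rw [hΨι]
    have hfac : AtomicFactorization (e w).1.1 (e w).1.2
        ((FreeMonoid.toList w).map Subtype.val) :=
      ⟨fun p hp => by obtain ⟨a, _, rfl⟩ := List.mem_map.mp hp; exact a.2, rfl⟩
    have hqf := qsum_factor m hone hmul _ _ _ hfac
    rw [hqf, List.map_map]
    rfl
  have hlin : Ψ.toLinearMap = (bF.equiv qb eE).toLinearMap := by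
    apply Module.Basis.ext bF
    intro w
    show Ψ (bF w) = (bF.equiv qb eE) (bF w)
    rw [Module.Basis.equiv_apply, hcomp w]
    show qsum m (e w).1.1 (e w).1.2 = qb (eE w)
    rw [Module.Basis.mk_apply]
    rfl
  have hfun : ⇑Ψ = ⇑(bF.equiv qb eE) := by
    funext x
    exact congrArg (fun f : FreeAlgebra ℚ AtomIdx →ₗ[ℚ] R => f x) hlin
  rw [hfun]
  exact (bF.equiv qb eE).bijective

end
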